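/- Let X be a real random variable (d = 1) whose distribution P_X has a unimodal pdf f_X, i.e., there is a mode m ∈ ℝ such that f_X is non-decreasing on (−∞, m] and non-increasing on [m, ∞). Then for every integer M ≥ 2, the high-noise Ziv–Zakai functionals do not improve with M: V̄(P_X, M) = V̄(P_X, 2) and V(P_X, M) = V(P_X, 2). -/

import Mathlib

open MeasureTheory ProbabilityTheory ENNReal

noncomputable section

variable {d : ℕ} {𝒴 : Type*} [MeasurableSpace 𝒴]

/-- Law of `X - u` when `X ∼ P`, scalar case. -/
def shiftLaw1 (P : Measure ℝ) (u : ℝ) : Measure ℝ :=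
  P.map (· - u)

/-- The mixture measure `μ_U = ∑_k P_{X-u_k}`, scalar case. -/
def mixMeasure1 (P : Measure ℝ) {M : ℕ} (U : Fin M → ℝ) : Measure ℝ :=
  ∑ k : Fin M, shiftLaw1 P (U k)

/-- `H(P_X,t,M)` in the scalar case, where the constraint forces `u_k = kt`:
`∫ max_j (dP_{X−jt}/dμ_U) dμ_U`. -/
def Hfun1 (P : Measure ℝ) (M : ℕ) (t : ℝ) : ℝ≥0∞ :=
  ∫⁻ x, (⨆ j : Fin M,
      (shiftLaw1 P ((j : ℝ) * t)).rnDeriv (mixMeasure1 P fun k : Fin M => (k : ℝ) * t) x)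
    ∂(mixMeasure1 P fun k : Fin M => (k : ℝ) * t)

/-- High-noise Ziv–Zakai functional with valley-filling, scalar case. -/
def Vbar1 (P : Measure ℝ) (M : ℕ) : ℝ≥0∞ :=
  ∫⁻ t in Set.Ioi (0 : ℝ),
    ENNReal.ofReal (t / 2) *
      ⨆ (u : ℝ) (_ : t ≤ u), ((M : ℝ≥0∞) - Hfun1 P M u) / ((M : ℝ≥0∞) - 1)

/-- High-noise Ziv–Zakai functional without valley-filling, scalar case. -/
def V1 (P : Measure ℝ) (M : ℕ) : ℝ≥0∞ :=
  ∫⁻ t in Set.Ioi (0 : ℝ),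
    ENNReal.ofReal (t / 2) * (((M : ℝ≥0∞) - Hfun1 P M t) / ((M : ℝ≥0∞) - 1))

section ZZAux

lemma zz_shiftLaw (g : ℝ → ℝ≥0∞) (hg : Measurable g) (u : ℝ) :
    shiftLaw1 (volume.withDensity g) u = volume.withDensity (fun x => g (x + u)) := by
  unfold shiftLaw1
  ext s hs
  have hpre : MeasurableSet ((· - u) ⁻¹' s) := hs.preimage (measurable_sub_const u)
  rw [Measure.map_apply (measurable_sub_const u) hs, withDensity_apply _ hpre,
    withDensity_apply _ hs, ← lintegral_indicator hpre _, ← lintegral_indicator hs _]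
  calc ∫⁻ x, ((· - u) ⁻¹' s).indicator g x
      = ∫⁻ x, (s.indicator fun y => g (y + u)) (x - u) := by
        refine lintegral_congr fun x => ?_
        by_cases hx : x - u ∈ s
        · simp [Set.indicator, hx, Set.mem_preimage]
        · simp [Set.indicator, hx, Set.mem_preimage]
    _ = ∫⁻ x, (s.indicator fun y => g (y + u)) x := lintegral_sub_right_eq_self _ u

lemma zz_mix (g : ℝ → ℝ≥0∞) (hg : Measurable g) {M : ℕ} (U : Fin M → ℝ) :
    mixMeasure1 (volume.withDensity g) U
      = volume.withDensity (fun x => ∑ k : Fin M, g (x + U k)) := by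
  unfold mixMeasure1
  simp_rw [zz_shiftLaw g hg]
  ext s hs
  rw [Measure.finset_sum_apply, withDensity_apply _ hs]
  simp_rw [withDensity_apply _ hs]
  exact (lintegral_finset_sum' _ fun k _ => (hg.comp (measurable_add_const (U k))).aemeasurable).symm

lemma zz_Hfun (g : ℝ → ℝ≥0∞) (hg : Measurable g) (hgfin : ∀ x, g x ≠ ∞) (M : ℕ) (t : ℝ) :
    Hfun1 (volume.withDensity g) M t = ∫⁻ x, ⨆ j : Fin M, g (x + (j : ℝ) * t) := by
  set G : ℝ → ℝ≥0∞ := fun x => ∑ k : Fin M, g (x + (k : ℝ) * t) with hGdef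
  have hGmeas : Measurable G :=
    Finset.measurable_sum _ fun k _ => hg.comp (measurable_add_const _)
  have hGtop : ∀ x, G x ≠ ∞ := fun x =>
    (ENNReal.sum_lt_top.2 fun k _ => (hgfin _).lt_top).ne
  have hle : ∀ (j : Fin M) x, g (x + (j : ℝ) * t) ≤ G x := fun j x =>
    Finset.single_le_sum (f := fun k : Fin M => g (x + (k : ℝ) * t))
      (fun k _ => zero_le) (Finset.mem_univ j)
  have hmix : (mixMeasure1 (volume.withDensity g) fun k : Fin M => (k : ℝ) * t)
      = volume.withDensity G := zz_mix g hg _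
  have hsf : SigmaFinite (volume.withDensity G) :=
    SigmaFinite.withDensity_of_ne_top (ae_of_all _ hGtop)
  have hcancel : ∀ (j : Fin M) x, G x * (g (x + (j : ℝ) * t) / G x) = g (x + (j : ℝ) * t) := by
    intro j x
    by_cases h0 : G x = 0
    · have hz : g (x + (j : ℝ) * t) = 0 := le_antisymm (h0 ▸ hle j x) zero_le
      simp [h0, hz]
    · exact ENNReal.mul_div_cancel h0 (hGtop x)
  have hrn : ∀ j : Fin M,
      (shiftLaw1 (volume.withDensity g) ((j : ℝ) * t)).rnDeriv (volume.withDensity G)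
        =ᵐ[volume.withDensity G] fun x => g (x + (j : ℝ) * t) / G x := by
    intro j
    have hjm : Measurable (fun x => g (x + (j : ℝ) * t) / G x) :=
      (hg.comp (measurable_add_const _)).div hGmeas
    rw [zz_shiftLaw g hg]
    have hwd : volume.withDensity (fun x => g (x + (j : ℝ) * t))
        = (volume.withDensity G).withDensity (fun x => g (x + (j : ℝ) * t) / G x) := by
      rw [← withDensity_mul _ hGmeas hjm]
      congr 1
      funext x
      exact (hcancel j x).symm
    rw [hwd]
    exact Measure.rnDeriv_withDensity _ hjm
  have hae : ∀ᵐ x ∂(volume.withDensity G), ∀ j : Fin M,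
      (shiftLaw1 (volume.withDensity g) ((j : ℝ) * t)).rnDeriv (volume.withDensity G) x
        = g (x + (j : ℝ) * t) / G x := ae_all_iff.2 hrn
  unfold Hfun1
  rw [hmix]
  calc ∫⁻ x, (⨆ j : Fin M,
        (shiftLaw1 (volume.withDensity g) ((j : ℝ) * t)).rnDeriv (volume.withDensity G) x)
        ∂(volume.withDensity G)
      = ∫⁻ x, (⨆ j : Fin M, g (x + (j : ℝ) * t) / G x) ∂(volume.withDensity G) :=
        lintegral_congr_ae (hae.mono fun x hx => iSup_congr hx)
    _ = ∫⁻ x, G x * ⨆ j : Fin M, g (x + (j : ℝ) * t) / G x := by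
        have hsm : Measurable (fun x => ⨆ j : Fin M, g (x + (j : ℝ) * t) / G x) :=
          Measurable.iSup fun j : Fin M =>
            ((hg.comp (measurable_add_const ((j : ℝ) * t))).div hGmeas :
              Measurable (fun x => g (x + (j : ℝ) * t) / G x))
        rw [lintegral_withDensity_eq_lintegral_mul _ hGmeas hsm]
        rfl
    _ = ∫⁻ x, ⨆ j : Fin M, g (x + (j : ℝ) * t) := by
        refine lintegral_congr fun x => ?_
        rw [ENNReal.mul_iSup]
        exact iSup_congr fun j => hcancel j x

lemma zz_qc {f : ℝ → ℝ} {m : ℝ} (hmono : MonotoneOn f (Set.Iic m))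
    (hanti : AntitoneOn f (Set.Ici m)) {x w z : ℝ} (hxw : x ≤ w) (hwz : w ≤ z) :
    min (f x) (f z) ≤ f w := by
  rcases le_total w m with hwm | hmw
  · exact le_trans (min_le_left _ _) (hmono (hxw.trans hwm) hwm hxw)
  · exact le_trans (min_le_right _ _) (hanti hmw (hmw.trans hwz) hwz)

lemma zz_measurable {f : ℝ → ℝ} {m : ℝ} (hmono : MonotoneOn f (Set.Iic m))
    (hanti : AntitoneOn f (Set.Ici m)) : Measurable f := by
  refine measurable_of_Ioi fun y => ?_
  have : (f ⁻¹' Set.Ioi y).OrdConnected := by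
    refine Set.ordConnected_def.2 fun x hx z hz => fun w hw => ?_
    simp only [Set.mem_preimage, Set.mem_Ioi] at *
    exact lt_of_lt_of_le (lt_min hx hz) (zz_qc hmono hanti hw.1 hw.2)
  exact this.measurableSet

lemma zz_sum_eq_iSup_add {M : ℕ} (hM : 1 ≤ M) (a : ℕ → ℝ≥0∞)
    (hq : ∀ i j k : ℕ, i ≤ j → j ≤ k → min (a i) (a k) ≤ a j) :
    ∑ i ∈ Finset.range M, a i
      = (⨆ j : Fin M, a j) + ∑ i ∈ Finset.range (M - 1), min (a i) (a (i + 1)) := by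
  obtain ⟨b, hbmem, hb⟩ := Finset.exists_max_image (Finset.range M) a ⟨0, Finset.mem_range.2 hM⟩
  rw [Finset.mem_range] at hbmem
  have hsup : (⨆ j : Fin M, a j) = a b := by
    apply le_antisymm
    · exact iSup_le fun j => hb j (Finset.mem_range.2 j.isLt)
    · exact le_iSup (fun j : Fin M => a ↑j) ⟨b, hbmem⟩
  have hbM1 : b ≤ M - 1 := Nat.le_sub_one_of_lt hbmem
  have hsplit : ∑ i ∈ Finset.range (M - 1), min (a i) (a (i + 1))
      = ∑ i ∈ Finset.range b, a i + ∑ i ∈ Finset.Ico b (M - 1), a (i + 1) := by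
    rw [Finset.range_eq_Ico, ← Finset.sum_Ico_consecutive _ (Nat.zero_le b) hbM1,
      ← Finset.range_eq_Ico]
    congr 1
    · refine Finset.sum_congr rfl fun i hi => ?_
      rw [Finset.mem_range] at hi
      have h2 : a i ≤ a b := hb i (Finset.mem_range.2 (hi.trans hbmem))
      have h1 : a i ≤ a (i + 1) := by
        have := hq i (i + 1) b (Nat.le_succ i) hi
        rwa [min_eq_left h2] at this
      exact min_eq_left h1
    · refine Finset.sum_congr rfl fun i hi => ?_
      rw [Finset.mem_Ico] at hi
      have hi1 : i + 1 < M := by omega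
      have h2 : a (i + 1) ≤ a b := hb _ (Finset.mem_range.2 hi1)
      have h1 : a (i + 1) ≤ a i := by
        have := hq b i (i + 1) hi.1 (Nat.le_succ i)
        rwa [min_eq_right h2] at this
      exact min_eq_right h1
  have hre : ∑ i ∈ Finset.Ico b (M - 1), a (i + 1) = ∑ i ∈ Finset.Ico (b + 1) M, a i := by
    rw [Finset.sum_Ico_eq_sum_range, Finset.sum_Ico_eq_sum_range]
    have h1 : M - 1 - b = M - (b + 1) := by omega
    rw [h1]
    exact Finset.sum_congr rfl fun i _ => by congr 1; omega
  have htot : ∑ i ∈ Finset.range M, a i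
      = ∑ i ∈ Finset.range b, a i + (a b + ∑ i ∈ Finset.Ico (b + 1) M, a i) := by
    rw [Finset.range_eq_Ico, ← Finset.sum_Ico_consecutive _ (Nat.zero_le b) hbmem.le,
      Finset.sum_eq_sum_Ico_succ_bot hbmem, ← Finset.range_eq_Ico]
  rw [hsplit, hre, hsup, htot]
  ring

lemma zz_H_add (g : ℝ → ℝ≥0∞) (hg : Measurable g) (hgfin : ∀ x, g x ≠ ∞)
    (hg1 : ∫⁻ x, g x = 1)
    (hgq : ∀ x w z : ℝ, x ≤ w → w ≤ z → min (g x) (g z) ≤ g w)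
    (N : ℕ) (hN : 1 ≤ N) {t : ℝ} (ht : 0 < t) :
    Hfun1 (volume.withDensity g) N t
      + (N - 1 : ℕ) * (∫⁻ x, min (g x) (g (x + t))) = N := by
  rw [zz_Hfun g hg hgfin]
  have hshift : ∀ c : ℝ, Measurable fun x => g (x + c) := fun c => hg.comp (measurable_add_const c)
  set I : ℝ≥0∞ := ∫⁻ x, min (g x) (g (x + t)) with hIdef
  -- each translated min integral equals I
  have htrans : ∀ i : ℕ, ∫⁻ x, min (g (x + (i : ℝ) * t)) (g (x + ((i + 1 : ℕ) : ℝ) * t)) = I := by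
    intro i
    have hpt : ∀ x : ℝ, min (g (x + (i : ℝ) * t)) (g (x + ((i + 1 : ℕ) : ℝ) * t))
        = (fun y => min (g y) (g (y + t))) (x + (i : ℝ) * t) := by
      intro x
      have : x + ((i + 1 : ℕ) : ℝ) * t = (x + (i : ℝ) * t) + t := by push_cast; ring
      simp only [this]
    simp_rw [hpt]
    exact lintegral_add_right_eq_self (fun y => min (g y) (g (y + t))) ((i : ℝ) * t)
  have hmeasi : ∀ i : ℕ, Measurable fun x => min (g (x + (i : ℝ) * t)) (g (x + ((i + 1 : ℕ) : ℝ) * t)) :=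
    fun i => (hg.comp (measurable_add_const _)).min (hg.comp (measurable_add_const _))
  have hsupmeas : Measurable fun x => ⨆ j : Fin N, g (x + (j : ℝ) * t) :=
    Measurable.iSup fun j => hg.comp (measurable_add_const _)
  have hNI : (N - 1 : ℕ) * I
      = ∫⁻ x, ∑ i ∈ Finset.range (N - 1),
          min (g (x + (i : ℝ) * t)) (g (x + ((i + 1 : ℕ) : ℝ) * t)) := by
    rw [lintegral_finset_sum _ fun i _ => hmeasi i]
    simp_rw [htrans]
    rw [Finset.sum_const, Finset.card_range, nsmul_eq_mul]
  rw [hNI, ← lintegral_add_left hsupmeas]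
  have hkey : ∀ x : ℝ, (⨆ j : Fin N, g (x + (j : ℝ) * t))
      + ∑ i ∈ Finset.range (N - 1),
          min (g (x + (i : ℝ) * t)) (g (x + ((i + 1 : ℕ) : ℝ) * t))
      = ∑ i ∈ Finset.range N, g (x + (i : ℝ) * t) := by
    intro x
    exact (zz_sum_eq_iSup_add hN (fun i => g (x + (i : ℝ) * t))
      (fun i j k hij hjk => hgq _ _ _
        (by have : (i : ℝ) ≤ j := Nat.cast_le.2 hij
            nlinarith)
        (by have : (j : ℝ) ≤ k := Nat.cast_le.2 hjk
            nlinarith))).symm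
  simp_rw [hkey]
  rw [lintegral_finset_sum (f := fun (i : ℕ) (x : ℝ) => g (x + (i : ℝ) * t))
    (Finset.range N) (fun i _ => hshift ((i : ℝ) * t))]
  have : ∀ i : ℕ, ∫⁻ x, g (x + (i : ℝ) * t) = 1 := fun i => by
    rw [lintegral_add_right_eq_self g ((i : ℝ) * t), hg1]
  simp_rw [this]
  rw [Finset.sum_const, Finset.card_range, nsmul_eq_mul, mul_one]

end ZZAux

/-- **For a unimodal input pdf, increasing the number of hypotheses `M` does not improve
the high-noise Ziv–Zakai functionals (Example, Section III-B).** -/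
theorem unimodal_high_noise_M_eq_two
    (P : Measure ℝ) [IsProbabilityMeasure P]
    (f : ℝ → ℝ) (m : ℝ)
    (hP : P = volume.withDensity fun x => ENNReal.ofReal (f x))
    (hmono : MonotoneOn f (Set.Iic m)) (hanti : AntitoneOn f (Set.Ici m))
    (M : ℕ) (hM : 2 ≤ M) :
    Vbar1 P M = Vbar1 P 2 ∧ V1 P M = V1 P 2 := by
  subst hP
  set g : ℝ → ℝ≥0∞ := fun x => ENNReal.ofReal (f x) with hgdef
  have hg : Measurable g := (zz_measurable hmono hanti).ennreal_ofReal
  have hgfin : ∀ x, g x ≠ ∞ := fun x => ENNReal.ofReal_ne_top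
  have hg1 : ∫⁻ x, g x = 1 := by
    have h := measure_univ (μ := volume.withDensity g)
    rwa [withDensity_apply _ MeasurableSet.univ, Measure.restrict_univ, ← hgdef] at h
  have hofmono : Monotone ENNReal.ofReal := fun a b hab => ENNReal.ofReal_le_ofReal hab
  have hgq : ∀ x w z : ℝ, x ≤ w → w ≤ z → min (g x) (g z) ≤ g w := by
    intro x w z hxw hwz
    calc min (g x) (g z) = ENNReal.ofReal (min (f x) (f z)) := (hofmono.map_min).symm
      _ ≤ g w := ENNReal.ofReal_le_ofReal (zz_qc hmono hanti hxw hwz)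
  -- the main ratio identity
  have hratio : ∀ N : ℕ, 2 ≤ N → ∀ u : ℝ, 0 < u →
      ((N : ℝ≥0∞) - Hfun1 (volume.withDensity g) N u) / ((N : ℝ≥0∞) - 1)
        = ∫⁻ x, min (g x) (g (x + u)) := by
    intro N hN u hu
    have hkey := zz_H_add g hg hgfin hg1 hgq N (by omega) hu
    set I : ℝ≥0∞ := ∫⁻ x, min (g x) (g (x + u)) with hIdef
    have hHne : Hfun1 (volume.withDensity g) N u ≠ ∞ := by
      refine ne_top_of_le_ne_top (ENNReal.natCast_ne_top N) ?_
      calc Hfun1 (volume.withDensity g) N u ≤ _ := le_self_add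
        _ = (N : ℝ≥0∞) := hkey
    have hsub : (N : ℝ≥0∞) - Hfun1 (volume.withDensity g) N u = (N - 1 : ℕ) * I :=
      ENNReal.sub_eq_of_eq_add_rev hHne hkey.symm
    have hc0 : ((N - 1 : ℕ) : ℝ≥0∞) ≠ 0 := Nat.cast_ne_zero.2 (by omega)
    have hcast : (N : ℝ≥0∞) - 1 = ((N - 1 : ℕ) : ℝ≥0∞) := by
      rw [ENNReal.natCast_sub, Nat.cast_one]
    rw [hsub, hcast, mul_comm, mul_div_assoc,
      ENNReal.div_self hc0 (ENNReal.natCast_ne_top _), mul_one]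
  constructor
  · unfold Vbar1
    refine setLIntegral_congr_fun measurableSet_Ioi (fun t ht => ?_)
    have ht' : (0 : ℝ) < t := ht
    refine congrArg (ENNReal.ofReal (t / 2) * ·) ?_
    refine iSup_congr fun u => iSup_congr fun h => ?_
    rw [hratio M hM u (ht'.trans_le h), hratio 2 le_rfl u (ht'.trans_le h)]
  · unfold V1
    refine setLIntegral_congr_fun measurableSet_Ioi (fun t ht => ?_)
    have ht' : (0 : ℝ) < t := ht
    rw [hratio M hM t ht', hratio 2 le_rfl t ht']
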